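/- Conditional on cluster assignments, the within-cluster resampling estimator has variance ∑_{j=1}^k (v_j²/|C_j|)·(E_j[f²] − E_j[f]²), where E_j[f] = ∑_{i∈C_j} (w_i/v_j) f(X^(i)); in particular, if every cluster's conditional weight distribution is degenerate (each cluster contains particles with equal values of f), the variance is zero. -/

import Mathlib

open MeasureTheory ProbabilityTheory

/-- Variance of the clustering-based weight-adjusted estimator: with independent
within-cluster multinomial draws, the variance equals
`∑ j, (v j)² / |C j| * (E_j[f²] − E_j[f]²)`; in particular it vanishes when `f` is
constant on each cluster. -/
theorem cluster_resampling_variance {α : Type*} (N k : ℕ) (hN : 0 < N)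
    (X : Fin N → α) (w : Fin N → ℝ) (hw : ∀ i, 0 ≤ w i) (hsum : ∑ i, w i = 1)
    (C : Fin k → Finset (Fin N)) (hne : ∀ j, (C j).Nonempty)
    (hdisj : ∀ j j', j ≠ j' → Disjoint (C j) (C j'))
    (hcover : ∀ i, ∃ j, i ∈ C j)
    (v : Fin k → ℝ) (hv : ∀ j, v j = ∑ i ∈ C j, w i) (hvpos : ∀ j, 0 < v j)
    {Ω : Type*} [MeasurableSpace Ω] (μ : Measure Ω) [IsProbabilityMeasure μ]
    (Y : (Σ j : Fin k, Fin (C j).card) → Ω → Fin N)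
    (hmeas : ∀ p, Measurable (Y p))
    (hlaw : ∀ (p : Σ j : Fin k, Fin (C j).card) (i : Fin N),
      μ (Y p ⁻¹' {i}) = ENNReal.ofReal (if i ∈ C p.1 then w i / v p.1 else 0))
    (hind : iIndepFun Y μ)
    (f : α → ℝ)
    (g : Ω → ℝ)
    (hg : ∀ ω, g ω = ∑ j, (v j / ((C j).card : ℝ)) * ∑ m : Fin (C j).card, f (X (Y ⟨j, m⟩ ω))) :
    (∫ ω, (g ω - ∫ ω', g ω' ∂μ) ^ 2 ∂μ =
        ∑ j, (v j) ^ 2 / ((C j).card : ℝ) *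
          ((∑ i ∈ C j, (w i / v j) * (f (X i)) ^ 2) - (∑ i ∈ C j, (w i / v j) * f (X i)) ^ 2)) ∧
      ((∀ j, ∀ i ∈ C j, ∀ i' ∈ C j, f (X i) = f (X i')) →
        ∫ ω, (g ω - ∫ ω', g ω' ∂μ) ^ 2 ∂μ = 0) := by
  classical
  -- generic facts for compositions with `Y p`
  have hYmeas : ∀ (p) (h : Fin N → ℝ), Measurable (fun ω => h (Y p ω)) :=
    fun p h => (Measurable.of_discrete (f := h)).comp (hmeas p)
  have hbound : ∀ (p) (h : Fin N → ℝ) (ω : Ω), ‖h (Y p ω)‖ ≤ ∑ i, ‖h i‖ := by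
    intro p h ω
    exact Finset.single_le_sum (f := fun i => ‖h i‖) (fun i _ => norm_nonneg _)
      (Finset.mem_univ _)
  have hmem : ∀ (p) (h : Fin N → ℝ), MemLp (fun ω => h (Y p ω)) 2 μ := by
    intro p h
    exact MemLp.of_bound ((hYmeas p h).aestronglyMeasurable) _
      (Filter.Eventually.of_forall (hbound p h))
  -- the moment formula
  have hmoment : ∀ (p) (h : Fin N → ℝ),
      ∫ ω, h (Y p ω) ∂μ = ∑ i ∈ C p.1, (w i / v p.1) * h i := by
    intro p h
    have hrw : (fun ω => h (Y p ω)) =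
        fun ω => ∑ i, Set.indicator (Y p ⁻¹' {i}) (fun _ => h i) ω := by
      funext ω
      simp only [Set.indicator_apply, Set.mem_preimage, Set.mem_singleton_iff]
      rw [Finset.sum_ite_eq (Finset.univ) (Y p ω) h]
      simp
    rw [hrw, integral_finset_sum _ (fun i _ =>
      (integrable_const (h i)).indicator ((hmeas p) (measurableSet_singleton i)))]
    have : ∀ i, ∫ ω, Set.indicator (Y p ⁻¹' {i}) (fun _ => h i) ω ∂μ
        = (if i ∈ C p.1 then w i / v p.1 else 0) * h i := by
      intro i
      rw [integral_indicator_const (h i) ((hmeas p) (measurableSet_singleton i)), measureReal_def, hlaw p i,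
        ENNReal.toReal_ofReal]
      · simp [smul_eq_mul]
      · split
        · exact div_nonneg (hw i) (hvpos p.1).le
        · exact le_refl 0
    simp_rw [this, ite_mul, zero_mul, Finset.sum_ite_mem, Finset.univ_inter]
  set φ : Fin N → ℝ := fun i => f (X i) with hφ
  set Z : (Σ j : Fin k, Fin (C j).card) → Ω → ℝ :=
    fun p ω => (v p.1 / ((C p.1).card : ℝ)) * φ (Y p ω) with hZ
  have hgZ : g = ∑ p, Z p := by
    funext ω
    rw [hg ω, Finset.sum_apply]
    rw [← Finset.univ_sigma_univ, Finset.sum_sigma]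
    exact Finset.sum_congr rfl fun j _ => by rw [Finset.mul_sum]
  have hZmem : ∀ p, MemLp (Z p) 2 μ := fun p => (hmem p φ).const_mul _
  have hgmem : MemLp g 2 μ := by
    rw [hgZ]; exact memLp_finset_sum' _ (fun p _ => hZmem p)
  have hpair : Set.Pairwise ↑(Finset.univ : Finset (Σ j : Fin k, Fin (C j).card))
      fun p q => IndepFun (Z p) (Z q) μ := by
    intro p _ q _ hpq
    have h0 : IndepFun ((fun i : Fin N => v p.1 / ((C p.1).card : ℝ) * φ i) ∘ Y p)
        ((fun i : Fin N => v q.1 / ((C q.1).card : ℝ) * φ i) ∘ Y q) μ :=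
      (hind.indepFun hpq).comp Measurable.of_discrete Measurable.of_discrete
    exact h0
  have hvar : variance g μ = ∑ p, variance (Z p) μ := by
    rw [hgZ]
    exact IndepFun.variance_sum (fun p _ => hZmem p) hpair
  have hvarZ : ∀ p, variance (Z p) μ = (v p.1 / ((C p.1).card : ℝ)) ^ 2 *
      ((∑ i ∈ C p.1, (w i / v p.1) * (f (X i)) ^ 2)
        - (∑ i ∈ C p.1, (w i / v p.1) * f (X i)) ^ 2) := by
    intro p
    rw [hZ]
    rw [variance_const_mul (v p.1 / ((C p.1).card : ℝ)) (fun ω => φ (Y p ω)) μ]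
    congr 1
    rw [variance_eq_sub (hmem p φ)]
    have e2 : μ[(fun ω => φ (Y p ω)) ^ 2] = ∑ i ∈ C p.1, (w i / v p.1) * (f (X i)) ^ 2 :=
      hmoment p (fun i => φ i ^ 2)
    have e1 : μ[fun ω => φ (Y p ω)] = ∑ i ∈ C p.1, (w i / v p.1) * f (X i) := hmoment p φ
    rw [e2, e1]
  have hmain : ∫ ω, (g ω - ∫ ω', g ω' ∂μ) ^ 2 ∂μ =
      ∑ j, (v j) ^ 2 / ((C j).card : ℝ) *
        ((∑ i ∈ C j, (w i / v j) * (f (X i)) ^ 2) - (∑ i ∈ C j, (w i / v j) * f (X i)) ^ 2) := by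
    have hlhs : ∫ ω, (g ω - ∫ ω', g ω' ∂μ) ^ 2 ∂μ = variance g μ := by
      rw [variance_eq_integral hgmem.aemeasurable]
    rw [hlhs, hvar]
    simp_rw [hvarZ]
    rw [← Finset.univ_sigma_univ, Finset.sum_sigma]
    refine Finset.sum_congr rfl fun j _ => ?_
    simp only [Finset.sum_const, Finset.card_univ, Fintype.card_fin, nsmul_eq_mul]
    have hc : ((C j).card : ℝ) ≠ 0 := by
      exact_mod_cast (Finset.card_pos.mpr (hne j)).ne'
    field_simp
  refine ⟨hmain, fun hconst => ?_⟩
  rw [hmain]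
  refine Finset.sum_eq_zero fun j _ => ?_
  obtain ⟨i₀, hi₀⟩ := hne j
  have hS : ∑ i ∈ C j, w i / v j = 1 := by
    rw [← Finset.sum_div, ← hv j, div_self (hvpos j).ne']
  have h2 : ∑ i ∈ C j, (w i / v j) * (f (X i)) ^ 2 = f (X i₀) ^ 2 := by
    rw [show ∑ i ∈ C j, (w i / v j) * (f (X i)) ^ 2
        = ∑ i ∈ C j, (w i / v j) * (f (X i₀)) ^ 2 from
      Finset.sum_congr rfl fun i hi => by rw [hconst j i hi i₀ hi₀],
      ← Finset.sum_mul, hS, one_mul]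
  have h1 : ∑ i ∈ C j, (w i / v j) * f (X i) = f (X i₀) := by
    rw [show ∑ i ∈ C j, (w i / v j) * f (X i)
        = ∑ i ∈ C j, (w i / v j) * f (X i₀) from
      Finset.sum_congr rfl fun i hi => by rw [hconst j i hi i₀ hi₀],
      ← Finset.sum_mul, hS, one_mul]
  rw [h1, h2]
  simp
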